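/- Let E and D be positive integers. There exists a constant C > 0, depending only on E, with the following property. For every positive integer N, every real E × D matrix P, every μ ∈ ℝ^D, every ξ_1, …, ξ_N ∈ ℝ^D with Σ_{i=1}^{N} ξ_i = 0, and every ε ∈ (0, 1], if max_{1 ≤ i ≤ N} ‖P(μ + ξ_i)‖₂ ≤ ε, then ‖(1/N) Σ_{i=1}^{N} softmax(P(μ + ξ_i)) − (1/E)·𝟙 − (1/E)·Π_E P μ‖₂ ≤ C ε². -/

import Mathlib

open Matrix

/-- Coordinatewise softmax on Euclidean space ℝ^E. -/
noncomputable def softmax {E : ℕ} (z : EuclideanSpace ℝ (Fin E)) : EuclideanSpace ℝ (Fin E) :=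
  WithLp.toLp 2 (fun e => Real.exp (z e) / ∑ j, Real.exp (z j))

/-- The all-ones vector 𝟙 ∈ ℝ^E. -/
def onesE (E : ℕ) : EuclideanSpace ℝ (Fin E) := WithLp.toLp 2 (fun _ => 1)

/-- The orthogonal projector onto the orthogonal complement of the all-ones vector:
`Π_E = I_E - (1/E) 𝟙𝟙ᵀ`. -/
noncomputable def projE (E : ℕ) : Matrix (Fin E) (Fin E) ℝ :=
  1 - (E : ℝ)⁻¹ • vecMulVec (fun _ => 1) (fun _ => 1)

/-- Matrix acting on Euclidean space vectors. -/
noncomputable def matApp {E D : ℕ} (P : Matrix (Fin E) (Fin D) ℝ)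
    (x : EuclideanSpace ℝ (Fin D)) : EuclideanSpace ℝ (Fin E) :=
  Matrix.toEuclideanLin P x

lemma matApp_coord {E D : ℕ} (P : Matrix (Fin E) (Fin D) ℝ)
    (x : EuclideanSpace ℝ (Fin D)) (e : Fin E) :
    matApp P x e = ∑ j, P e j * x j := by
  simp [matApp, Matrix.toEuclideanLin_apply, Matrix.mulVec, dotProduct]

lemma matApp_sum {E D N : ℕ} (P : Matrix (Fin E) (Fin D) ℝ)
    (f : Fin N → EuclideanSpace ℝ (Fin D)) :
    ∑ i, matApp P (f i) = matApp P (∑ i, f i) :=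
  (map_sum (Matrix.toEuclideanLin P) f Finset.univ).symm

lemma matApp_smul {E D : ℕ} (P : Matrix (Fin E) (Fin D) ℝ) (c : ℝ)
    (x : EuclideanSpace ℝ (Fin D)) :
    matApp P (c • x) = c • matApp P x := map_smul (Matrix.toEuclideanLin P) c x

lemma matApp_add {E D : ℕ} (P : Matrix (Fin E) (Fin D) ℝ)
    (x y : EuclideanSpace ℝ (Fin D)) :
    matApp P (x + y) = matApp P x + matApp P y := map_add _ x y

lemma projE_coord {E : ℕ} (w : EuclideanSpace ℝ (Fin E)) (e : Fin E) :
    matApp (projE E) w e = w e - (E : ℝ)⁻¹ * ∑ j, w j := by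
  rw [matApp_coord]
  simp only [projE, Matrix.sub_apply, Matrix.one_apply, Matrix.smul_apply,
    Matrix.vecMulVec_apply, smul_eq_mul, mul_one, sub_mul]
  rw [Finset.sum_sub_distrib]
  congr 1
  · simp [Finset.sum_ite_eq, ite_mul]
  · rw [Finset.mul_sum]

lemma norm_le_of_coord {E : ℕ} (v : EuclideanSpace ℝ (Fin E)) (c : ℝ) (hc : 0 ≤ c)
    (h : ∀ e, |v e| ≤ c) : ‖v‖ ≤ E * c := by
  rw [EuclideanSpace.norm_eq]
  have h1 : ∑ i, ‖v i‖ ^ 2 ≤ (E : ℝ) * c ^ 2 := by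
    calc ∑ i, ‖v i‖ ^ 2 ≤ ∑ _i : Fin E, c ^ 2 := Finset.sum_le_sum fun i _ => by
          rw [Real.norm_eq_abs]; exact pow_le_pow_left₀ (abs_nonneg _) (h i) 2
      _ = (E : ℝ) * c ^ 2 := by simp [mul_comm]
  have h2 : (E : ℝ) * c ^ 2 ≤ ((E : ℝ) * c) ^ 2 := by
    have hE2 : (E : ℝ) ≤ (E : ℝ) ^ 2 := by
      exact_mod_cast Nat.le_self_pow two_ne_zero E
    nlinarith [sq_nonneg c]
  calc Real.sqrt (∑ i, ‖v i‖ ^ 2) ≤ Real.sqrt (((E : ℝ) * c) ^ 2) :=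
        Real.sqrt_le_sqrt (h1.trans h2)
    _ = (E : ℝ) * c := Real.sqrt_sq (by positivity)

lemma coord_abs_le_norm {E : ℕ} (z : EuclideanSpace ℝ (Fin E)) (e : Fin E) : |z e| ≤ ‖z‖ := by
  rw [EuclideanSpace.norm_eq, ← Real.sqrt_sq_eq_abs]
  apply Real.sqrt_le_sqrt
  have := Finset.single_le_sum (f := fun i => ‖z i‖ ^ 2)
    (fun i _ => by positivity) (Finset.mem_univ e)
  simpa [Real.norm_eq_abs, sq_abs] using this

lemma sum_sq_eq_norm_sq {E : ℕ} (z : EuclideanSpace ℝ (Fin E)) :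
    ∑ j, (z j) ^ 2 = ‖z‖ ^ 2 := by
  have := PiLp.norm_sq_eq_of_L2 (fun _ : Fin E => ℝ) z
  simpa [Real.norm_eq_abs, sq_abs] using this.symm

set_option maxHeartbeats 1000000 in
lemma softmax_coord_bound {E : ℕ} (hE : 0 < E) (z : EuclideanSpace ℝ (Fin E))
    (hz : ‖z‖ ≤ 1) (e : Fin E) :
    |softmax z e - (E : ℝ)⁻¹ - (E : ℝ)⁻¹ * (z e - (E : ℝ)⁻¹ * ∑ j, z j)|
      ≤ 18 * ‖z‖ ^ 2 := by
  set n : ℝ := ‖z‖ with hn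
  have hn0 : 0 ≤ n := norm_nonneg _
  set ee : ℝ := (E : ℝ) with hee
  have he1 : (1 : ℝ) ≤ ee := by
    rw [hee]; exact_mod_cast Nat.one_le_iff_ne_zero.2 hE.ne'
  have he0 : (0 : ℝ) < ee := lt_of_lt_of_le one_pos he1
  set S : ℝ := ∑ j, Real.exp (z j) with hS
  set s : ℝ := ∑ j, z j with hs
  set r : Fin E → ℝ := fun j => Real.exp (z j) - 1 - z j with hrdef
  set R : ℝ := ∑ j, r j with hR
  have hcoord : ∀ j, |z j| ≤ n := fun j => coord_abs_le_norm z j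
  have hr : ∀ j, |r j| ≤ (z j) ^ 2 := fun j =>
    Real.abs_exp_sub_one_sub_id_le ((hcoord j).trans hz)
  have hsumsq : ∑ j, (z j) ^ 2 = n ^ 2 := sum_sq_eq_norm_sq z
  have hRle : |R| ≤ n ^ 2 := by
    calc |R| ≤ ∑ j, |r j| := Finset.abs_sum_le_sum_abs _ _
      _ ≤ ∑ j, (z j) ^ 2 := Finset.sum_le_sum fun j _ => hr j
      _ = n ^ 2 := hsumsq
  have hsle : |s| ≤ ee * n := by
    calc |s| ≤ ∑ j, |z j| := Finset.abs_sum_le_sum_abs _ _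
      _ ≤ ∑ _j : Fin E, n := Finset.sum_le_sum fun j _ => hcoord j
      _ = ee * n := by simp [hee, mul_comm]
  have hSeq : S = ee + s + R := by
    simp only [hS, hrdef, hs, hR, hee]
    rw [Finset.sum_congr rfl (fun j _ => by ring : ∀ j ∈ Finset.univ,
      Real.exp (z j) = 1 + z j + (Real.exp (z j) - 1 - z j))]
    rw [Finset.sum_add_distrib, Finset.sum_add_distrib]
    simp [mul_comm]
  have hSlb : ee / 3 ≤ S := by
    have h3 : (1 : ℝ) / 3 ≤ Real.exp (-1) := by
      rw [Real.exp_neg, inv_eq_one_div]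
      exact one_div_le_one_div_of_le (Real.exp_pos 1)
        (by linarith [Real.exp_one_lt_d9])
    calc ee / 3 = ∑ _j : Fin E, (1:ℝ)/3 := by simp [hee]; ring
      _ ≤ ∑ j, Real.exp (z j) := Finset.sum_le_sum fun j _ => by
          refine h3.trans (Real.exp_le_exp.2 ?_)
          have := (abs_le.1 ((hcoord j).trans hz)).1
          linarith
      _ = S := rfl
  have hSpos : (0:ℝ) < S := lt_of_lt_of_le (by positivity) hSlb
  have hS0 : S ≠ 0 := hSpos.ne'
  have hsm : softmax z e = Real.exp (z e) / S := rfl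
  clear_value n ee S s r R
  have hident : softmax z e - ee⁻¹ - ee⁻¹ * (z e - ee⁻¹ * s)
      = (ee^2 * Real.exp (z e) - S * (ee + ee * z e - s)) / (ee^2 * S) := by
    rw [hsm]
    field_simp
    ring
  have hre : Real.exp (z e) = 1 + z e + r e := by simp only [hrdef]; ring
  have hnum : ee^2 * Real.exp (z e) - S * (ee + ee * z e - s)
      = ee^2 * r e + (-(ee * s * z e)) + s^2 + (-(R * (ee + ee * z e - s))) := by
    rw [hre, hSeq]; ring
  have hze2 : (z e)^2 ≤ n^2 := by
    have := hcoord e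
    nlinarith [abs_nonneg (z e), sq_abs (z e)]
  have hA : |ee^2 * r e| ≤ ee^2 * n^2 := by
    rw [abs_mul, abs_of_nonneg (by positivity : (0:ℝ) ≤ ee^2)]
    exact mul_le_mul_of_nonneg_left ((hr e).trans hze2) (by positivity)
  have hB : |ee * s * z e| ≤ ee^2 * n^2 := by
    rw [abs_mul, abs_mul, abs_of_nonneg he0.le]
    have hp : |s| * |z e| ≤ ee * n * n :=
      mul_le_mul hsle (hcoord e) (abs_nonneg _) (by positivity)
    nlinarith [mul_le_mul_of_nonneg_left hp he0.le]
  have hC : |s^2| ≤ ee^2 * n^2 := by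
    rw [abs_of_nonneg (sq_nonneg s)]
    calc s^2 = |s|^2 := (sq_abs s).symm
      _ ≤ (ee*n)^2 := pow_le_pow_left₀ (abs_nonneg s) hsle 2
      _ = ee^2*n^2 := by ring
  have hD : |R * (ee + ee * z e - s)| ≤ 3 * ee^2 * n^2 := by
    rw [abs_mul]
    have h2 : |ee + ee * z e - s| ≤ 3 * ee := by
      rw [abs_le]
      have h3 := abs_le.1 (hcoord e)
      have h4 := abs_le.1 hsle
      have p1 : ee * z e ≤ ee * n := mul_le_mul_of_nonneg_left h3.2 he0.le
      have p2 : ee * (-n) ≤ ee * z e := mul_le_mul_of_nonneg_left h3.1 he0.le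
      have p3 : ee * n ≤ ee * 1 := mul_le_mul_of_nonneg_left hz he0.le
      constructor <;> [linarith; linarith]
    calc |R| * |ee + ee * z e - s| ≤ n^2 * (3 * ee) :=
          mul_le_mul hRle h2 (abs_nonneg _) (by positivity)
      _ = 3 * ee * n^2 := by ring
      _ ≤ 3 * ee^2 * n^2 := by
          have h9 : (0:ℝ) ≤ 3 * ee * n^2 :=
            mul_nonneg (mul_nonneg (by norm_num) he0.le) (sq_nonneg n)
          have h10 := mul_le_mul_of_nonneg_right he1 h9
          linarith [h10]
  have habs : |ee^2 * Real.exp (z e) - S * (ee + ee * z e - s)| ≤ 6 * ee^2 * n^2 := by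
    rw [hnum]
    calc |ee^2 * r e + (-(ee * s * z e)) + s^2 + (-(R * (ee + ee * z e - s)))|
        ≤ |ee^2 * r e + (-(ee * s * z e)) + s^2| + |(-(R * (ee + ee * z e - s)))| :=
          abs_add_le _ _
      _ ≤ (|ee^2 * r e + (-(ee * s * z e))| + |s^2|) + |(-(R * (ee + ee * z e - s)))| := by
          gcongr; exact abs_add_le _ _
      _ ≤ ((|ee^2 * r e| + |(-(ee * s * z e))|) + |s^2|) + |(-(R * (ee + ee * z e - s)))| := by
          gcongr; exact abs_add_le _ _
      _ = |ee^2 * r e| + |ee * s * z e| + |s^2| + |R * (ee + ee * z e - s)| := by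
          rw [abs_neg, abs_neg]
      _ ≤ ee^2 * n^2 + ee^2 * n^2 + ee^2 * n^2 + 3 * ee^2 * n^2 :=
          add_le_add (add_le_add (add_le_add hA hB) hC) hD
      _ = 6 * ee^2 * n^2 := by ring
  rw [hident, abs_div, abs_of_pos (by positivity : (0:ℝ) < ee^2 * S),
    div_le_iff₀ (by positivity)]
  calc |ee^2 * Real.exp (z e) - S * (ee + ee * z e - s)| ≤ 6 * ee^2 * n^2 := habs
    _ ≤ 18 * n^2 * (ee^2 * S) := by
        have hkey := mul_le_mul_of_nonneg_left hSlb
          (by positivity : (0:ℝ) ≤ 18 * n^2 * ee^2)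
        nlinarith [hn0, he1, sq_nonneg n, sq_nonneg ee, mul_nonneg (mul_nonneg (by norm_num : (0:ℝ) ≤ 6) (sq_nonneg n)) (sq_nonneg ee)]

theorem stmt8 (E D : ℕ) (hE : 0 < E) (hD : 0 < D) :
    ∃ C > (0 : ℝ),
      ∀ (N : ℕ), 0 < N →
      ∀ (P : Matrix (Fin E) (Fin D) ℝ) (μ : EuclideanSpace ℝ (Fin D))
        (ξ : Fin N → EuclideanSpace ℝ (Fin D)), (∑ i, ξ i) = 0 →
      ∀ ε : ℝ, 0 < ε → ε ≤ 1 →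
      (∀ i : Fin N, ‖matApp P (μ + ξ i)‖ ≤ ε) →
      ‖(N : ℝ)⁻¹ • (∑ i, softmax (matApp P (μ + ξ i)))
          - (E : ℝ)⁻¹ • onesE E
          - (E : ℝ)⁻¹ • matApp (projE E) (matApp P μ)‖ ≤ C * ε ^ 2 := by
  refine ⟨18 * E, by positivity, ?_⟩
  intro N hN P μ ξ hξ ε hε hε1 hbound
  have hN0 : ((N : ℝ)) ≠ 0 := Nat.cast_ne_zero.2 hN.ne'
  set z : Fin N → EuclideanSpace ℝ (Fin E) := fun i => matApp P (μ + ξ i) with hzdef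
  set v : Fin N → EuclideanSpace ℝ (Fin E) := fun i =>
    softmax (z i) - (E : ℝ)⁻¹ • onesE E - (E : ℝ)⁻¹ • matApp (projE E) (z i) with hvdef
  have hsumz : ∑ i, z i = (N : ℝ) • matApp P μ := by
    calc ∑ i, z i = ∑ i, (matApp P μ + matApp P (ξ i)) := by
          simp [hzdef, matApp_add]
      _ = (N : ℝ) • matApp P μ + matApp P (∑ i, ξ i) := by
          rw [Finset.sum_add_distrib, Finset.sum_const, Finset.card_univ, Fintype.card_fin,
            matApp_sum]
          rw [Nat.cast_smul_eq_nsmul]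
      _ = (N : ℝ) • matApp P μ := by
          rw [hξ]; simp [matApp]
  have hdecomp : (N : ℝ)⁻¹ • (∑ i, softmax (z i))
          - (E : ℝ)⁻¹ • onesE E
          - (E : ℝ)⁻¹ • matApp (projE E) (matApp P μ)
      = (N : ℝ)⁻¹ • ∑ i, v i := by
    have e1 : ∑ i, v i = (∑ i, softmax (z i))
        - (N : ℝ) • ((E : ℝ)⁻¹ • onesE E)
        - (N : ℝ) • ((E : ℝ)⁻¹ • matApp (projE E) (matApp P μ)) := by
      simp only [hvdef]
      rw [Finset.sum_sub_distrib, Finset.sum_sub_distrib]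
      congr 1
      · congr 1
        rw [Finset.sum_const, Finset.card_univ, Fintype.card_fin]
        rw [Nat.cast_smul_eq_nsmul]
      · rw [← Finset.smul_sum, matApp_sum, hsumz, matApp_smul, smul_comm]
    rw [e1, smul_sub, smul_sub, inv_smul_smul₀ hN0, inv_smul_smul₀ hN0]
  have hvnorm : ∀ i, ‖v i‖ ≤ (E : ℝ) * (18 * ε ^ 2) := by
    intro i
    apply norm_le_of_coord _ _ (by positivity)
    intro e
    have hcoordeq : v i e = softmax (z i) e - (E : ℝ)⁻¹
        - (E : ℝ)⁻¹ * (z i e - (E : ℝ)⁻¹ * ∑ j, z i j) := by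
      have : v i e = softmax (z i) e - (E : ℝ)⁻¹ * (onesE E e)
          - (E : ℝ)⁻¹ * (matApp (projE E) (z i) e) := rfl
      rw [this, projE_coord]
      simp [onesE]
    rw [hcoordeq]
    have hz1 : ‖z i‖ ≤ 1 := (hbound i).trans hε1
    have := softmax_coord_bound hE (z i) hz1 e
    have hzz : 18 * ‖z i‖ ^ 2 ≤ 18 * ε ^ 2 := by
      have := hbound i
      nlinarith [norm_nonneg (z i)]
    exact le_trans this hzz
  rw [hdecomp, norm_smul]
  have hsum : ‖∑ i, v i‖ ≤ (N : ℝ) * ((E : ℝ) * (18 * ε ^ 2)) := by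
    calc ‖∑ i, v i‖ ≤ ∑ i, ‖v i‖ := norm_sum_le _ _
      _ ≤ ∑ _i : Fin N, (E : ℝ) * (18 * ε ^ 2) := Finset.sum_le_sum fun i _ => hvnorm i
      _ = (N : ℝ) * ((E : ℝ) * (18 * ε ^ 2)) := by simp [mul_comm]
  have hNpos : (0 : ℝ) < (N : ℝ) := by exact_mod_cast hN
  calc ‖((N : ℝ)⁻¹ : ℝ)‖ * ‖∑ i, v i‖ = (N : ℝ)⁻¹ * ‖∑ i, v i‖ := by
        rw [Real.norm_eq_abs, abs_of_pos (by positivity)]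
    _ ≤ (N : ℝ)⁻¹ * ((N : ℝ) * ((E : ℝ) * (18 * ε ^ 2))) := by
        exact mul_le_mul_of_nonneg_left hsum (by positivity)
    _ = 18 * (E : ℝ) * ε ^ 2 := by
        field_simp
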